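/- Let f satisfy Assumption A and ρ > 0, and let W, W₁, W₂, … be i.i.d. real random variables with E|W|^{1+ε} < ∞ for some ε > 0. Then, almost surely, sup_{p ∈ Δ_{n,ρ}} Σ_{i=1}^n p_i W_i → E[W] and inf_{p ∈ Δ_{n,ρ}} Σ_{i=1}^n p_i W_i → E[W] as n → ∞. -/

import Mathlib

open MeasureTheory ProbabilityTheory Filter Set

noncomputable section

/-- Assumption A: `f : ℝ → ℝ ∪ {+∞}` is lower semicontinuous, convex, equal to `+∞` on
negative reals, three times continuously differentiable on a neighborhood of `1`, with
`f 1 = f' 1 = 0` and `f'' 1 = 2`. -/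
structure IsDivergenceFn (f : ℝ → EReal) : Prop where
  lsc : LowerSemicontinuous f
  convex : ∀ x y a b : ℝ, 0 ≤ a → 0 ≤ b → a + b = 1 →
    f (a * x + b * y) ≤ (a : EReal) * f x + (b : EReal) * f y
  eq_top_of_neg : ∀ t : ℝ, t < 0 → f t = ⊤
  smooth : ∃ g : ℝ → ℝ, ∃ ε : ℝ, 0 < ε ∧
    (∀ t ∈ Set.Ioo (1 - ε) (1 + ε), f t = (g t : EReal)) ∧
    ContDiffOn ℝ 3 g (Set.Ioo (1 - ε) (1 + ε)) ∧
    g 1 = 0 ∧ deriv g 1 = 0 ∧ deriv (deriv g) 1 = 2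

/-- The empirical `f`-divergence ball `Δ_{n,ρ}`. -/
def simplexBall (f : ℝ → EReal) (n : ℕ) (ρ : ℝ) : Set (Fin n → ℝ) :=
  {p | (∀ i, 0 ≤ p i) ∧ ∑ i, p i = 1 ∧ ∑ i, f ((n : ℝ) * p i) ≤ (ρ : EReal)}

/-- Sample mean `z̄ = (1/n) ∑ z_i`. -/
def sampleMean {n : ℕ} (z : Fin n → ℝ) : ℝ := (∑ i, z i) / n

/-- Sample variance `s_n(z)² = (1/n) ∑ (z_i − z̄)²`. -/
def sampleVar {n : ℕ} (z : Fin n → ℝ) : ℝ := (∑ i, (z i - sampleMean z) ^ 2) / n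

/-- The Huber function `h_ε`. -/
def huber (ε t : ℝ) : ℝ := if |t| ≤ ε then t ^ 2 / 2 else ε * |t| - ε ^ 2 / 2

section Aux


/-- For `0 ≤ θ ≤ 1` and `x ≥ 0`, `x ^ θ ≤ 1 + x`. -/
lemma aux_rpow_le_one_add {x θ : ℝ} (hx : 0 ≤ x) (h0 : 0 ≤ θ) (h1 : θ ≤ 1) :
    x ^ θ ≤ 1 + x := by
  rcases le_total x 1 with h | h
  · exact (Real.rpow_le_one hx h h0).trans (by linarith)
  · calc x ^ θ ≤ x ^ (1:ℝ) := Real.rpow_le_rpow_of_exponent_le h h1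
    _ = x := Real.rpow_one x
    _ ≤ 1 + x := by linarith

/-- For `b ≥ 1` and `x ≥ 0`, `x ≤ 1 + x ^ b`. -/
lemma aux_self_le_one_add_rpow {x b : ℝ} (hx : 0 ≤ x) (hb : 1 ≤ b) :
    x ≤ 1 + x ^ b := by
  rcases le_total x 1 with h | h
  · have : 0 ≤ x ^ b := Real.rpow_nonneg hx b
    linarith
  · calc x = x ^ (1:ℝ) := (Real.rpow_one x).symm
    _ ≤ x ^ b := Real.rpow_le_rpow_of_exponent_le h hb
    _ ≤ 1 + x ^ b := by linarith

/-- For `0 ≤ a ≤ b` and `x ≥ 0`, `x ^ a ≤ 1 + x ^ b`. -/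
lemma aux_rpow_le_one_add_rpow {x a b : ℝ} (hx : 0 ≤ x) (ha : 0 ≤ a) (hab : a ≤ b) :
    x ^ a ≤ 1 + x ^ b := by
  rcases le_total x 1 with h | h
  · have : 0 ≤ x ^ b := Real.rpow_nonneg hx b
    have := Real.rpow_le_one hx h ha
    linarith
  · calc x ^ a ≤ x ^ b := Real.rpow_le_rpow_of_exponent_le h hab
    _ ≤ 1 + x ^ b := by linarith

/-- For `x ≥ 0` and `1 ≤ a ≤ 2`, `x ^ 2 ≤ (2 + x ^ a) * x ^ a` (rpow). -/
lemma aux_sq_le {x a : ℝ} (hx : 0 ≤ x) (ha1 : 1 ≤ a) (ha2 : a ≤ 2) :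
    x ^ (2:ℕ) ≤ (2 + x ^ a) * x ^ a := by
  rcases eq_or_lt_of_le hx with h0 | h0
  · rw [← h0]
    have : (0:ℝ) ^ a = 0 := Real.zero_rpow (by linarith)
    simp [this]
  · have hxa : (0:ℝ) ≤ x ^ a := Real.rpow_nonneg hx a
    have key : x ^ (2:ℕ) = x ^ (2 - a) * x ^ a := by
      rw [← Real.rpow_natCast x 2, ← Real.rpow_add h0]
      norm_num
    rw [key]
    have h1 : x ^ (2 - a) ≤ 1 + x := aux_rpow_le_one_add hx (by linarith) (by linarith)
    have h2 : x ≤ 1 + x ^ a := aux_self_le_one_add_rpow hx ha1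
    have : x ^ (2 - a) ≤ 2 + x ^ a := by linarith
    exact mul_le_mul_of_nonneg_right this hxa

/-- Running maximum of a sequence, starting at `0`. -/
def runMax (b : ℕ → ℝ) : ℕ → ℝ
  | 0 => 0
  | n + 1 => max (runMax b n) (b n)

lemma runMax_nonneg (b : ℕ → ℝ) (n : ℕ) : 0 ≤ runMax b n := by
  induction n with
  | zero => exact le_refl 0
  | succ n ih => exact le_trans ih (le_max_left _ _)

lemma le_runMax (b : ℕ → ℝ) {i n : ℕ} (h : i < n) : b i ≤ runMax b n := by
  induction n with
  | zero => omega
  | succ n ih =>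
      rcases Nat.lt_succ_iff_lt_or_eq.mp h with h' | h'
      · exact (ih h').trans (le_max_left _ _)
      · subst h'; exact le_max_right _ _

lemma runMax_mono (b : ℕ → ℝ) : Monotone (runMax b) := by
  apply monotone_nat_of_le_succ
  intro n
  exact le_max_left _ _

lemma runMax_le (b : ℕ → ℝ) {n : ℕ} {C : ℝ} (hC : 0 ≤ C) (h : ∀ i < n, b i ≤ C) :
    runMax b n ≤ C := by
  induction n with
  | zero => exact hC
  | succ n ih =>
      exact max_le (ih fun i hi => h i (hi.trans (Nat.lt_succ_self n)))
        (h n (Nat.lt_succ_self n))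

/-- If `b n / n → 0` with `b ≥ 0`, then `runMax b n / n → 0`. -/
lemma runMax_tendsto (b : ℕ → ℝ) (hb : ∀ i, 0 ≤ b i)
    (h : Tendsto (fun n : ℕ => b n / n) atTop (nhds 0)) :
    Tendsto (fun n : ℕ => runMax b n / n) atTop (nhds 0) := by
  rw [Metric.tendsto_atTop] at h ⊢
  intro ε hε
  obtain ⟨N, hN⟩ := h (ε / 2) (by linarith)
  -- for i ≥ N (and i ≥ 1), b i ≤ (ε/2) * i
  have hbound : ∀ i, max 1 N ≤ i → b i ≤ ε / 2 * i := by
    intro i hi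
    have hi1 : 1 ≤ i := le_trans (le_max_left _ _) hi
    have hiN : N ≤ i := le_trans (le_max_right _ _) hi
    have := hN i hiN
    rw [Real.dist_eq, sub_zero, abs_of_nonneg (div_nonneg (hb i) (Nat.cast_nonneg i))] at this
    have hipos : (0:ℝ) < i := by exact_mod_cast hi1
    calc b i = b i / i * i := by field_simp
    _ ≤ ε / 2 * i := mul_le_mul_of_nonneg_right (le_of_lt this) (le_of_lt hipos)
  set C := runMax b (max 1 N) with hC
  have hCnn : 0 ≤ C := runMax_nonneg _ _
  -- for n ≥ max 1 N : runMax b n ≤ C + (ε/2) * n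
  have key : ∀ n, max 1 N ≤ n → runMax b n ≤ C + ε / 2 * n := by
    intro n hn
    induction n with
    | zero => simp at hn
    | succ n ih =>
        rcases le_or_gt (max 1 N) n with h' | h'
        · have := ih h'
          have hb' : b n ≤ ε / 2 * n := hbound n h'
          have : runMax b (n+1) ≤ max (C + ε / 2 * n) (ε / 2 * n) := by
            apply max_le
            · exact this.trans (le_max_left _ _)
            · exact hb'.trans (le_max_right _ _)
          have hn0 : (0:ℝ) ≤ n := Nat.cast_nonneg n
          have : runMax b (n+1) ≤ C + ε / 2 * n := by
            apply this.trans
            apply max_le le_rfl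
            linarith [mul_nonneg (by linarith : (0:ℝ) ≤ ε/2) hn0]
          apply this.trans
          have : (n:ℝ) ≤ (n+1:ℕ) := by push_cast; linarith
          nlinarith
        · -- n + 1 = max 1 N
          have : n + 1 = max 1 N := by omega
          rw [this]
          have : (0:ℝ) ≤ ε / 2 * (max 1 N : ℕ) :=
            mul_nonneg (by linarith) (Nat.cast_nonneg _)
          linarith
  have hCdiv : Tendsto (fun n : ℕ => C / n) atTop (nhds 0) :=
    tendsto_const_div_atTop_nhds_zero_nat C
  rw [Metric.tendsto_atTop] at hCdiv
  obtain ⟨N₂, hN₂⟩ := hCdiv (ε / 2) (by linarith)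
  refine ⟨max (max 1 N) N₂, fun n hn => ?_⟩
  have h1 : max 1 N ≤ n := le_trans (le_max_left _ _) hn
  have h2 : N₂ ≤ n := le_trans (le_max_right _ _) hn
  have hn1 : 1 ≤ n := le_trans (le_max_left _ _) h1
  have hnpos : (0:ℝ) < n := by exact_mod_cast hn1
  have hkey := key n h1
  have hC2 := hN₂ n h2
  rw [Real.dist_eq, sub_zero, abs_of_nonneg (div_nonneg hCnn hnpos.le)] at hC2
  rw [Real.dist_eq, sub_zero,
    abs_of_nonneg (div_nonneg (runMax_nonneg b n) hnpos.le)]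
  have : runMax b n / n ≤ C / n + ε / 2 := by
    rw [div_add' _ _ _ hnpos.ne', div_le_div_iff_of_pos_right hnpos]
    linarith
  linarith


lemma aux_term_div (S : ℕ → ℝ) (L : ℝ)
    (h : Tendsto (fun n : ℕ => S n / n) atTop (nhds L)) :
    Tendsto (fun n : ℕ => (S (n + 1) - S n) / n) atTop (nhds 0) := by
  have h1 : Tendsto (fun n : ℕ => S (n + 1) / (n + 1)) atTop (nhds L) := by
    have := h.comp (tendsto_add_atTop_nat 1)
    apply this.congr
    intro n
    simp only [Function.comp]
    push_cast
    ring_nf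
  have hrat : Tendsto (fun n : ℕ => ((n:ℝ) + 1) / n) atTop (nhds 1) := by
    have : (fun n : ℕ => ((n:ℝ) + 1) / n) =ᶠ[atTop] fun n : ℕ => 1 + 1 / n := by
      filter_upwards [eventually_ge_atTop 1] with n hn
      have : (n:ℝ) ≠ 0 := by positivity
      field_simp
    rw [tendsto_congr' this]
    have : Tendsto (fun n : ℕ => 1 / (n:ℝ)) atTop (nhds 0) :=
      tendsto_one_div_atTop_nhds_zero_nat
    simpa using (tendsto_const_nhds (x := (1:ℝ))).add this
  have h2 : Tendsto (fun n : ℕ => S (n + 1) / n) atTop (nhds L) := by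
    have := h1.mul hrat
    rw [mul_one] at this
    apply this.congr'
    filter_upwards [eventually_ge_atTop 1] with n hn
    have hn0 : (n:ℝ) ≠ 0 := by positivity
    have hn1 : (n:ℝ) + 1 ≠ 0 := by positivity
    field_simp
  have := h2.sub h
  simpa [sub_div] using this

lemma aux_coe_fsum {ι : Type*} [DecidableEq ι] (s : Finset ι) (a : ι → ℝ) :
    ((∑ i ∈ s, a i : ℝ) : EReal) = ∑ i ∈ s, (a i : EReal) := by
  induction s using Finset.induction with
  | empty => simp
  | insert _ _ h ih => rw [Finset.sum_insert h, Finset.sum_insert h, EReal.coe_add, ih]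

/-- Sum of squared deviations from the mean is at most the sum of squares. -/
lemma aux_dev_sq_le {n : ℕ} (z : Fin n → ℝ) (m : ℝ) (hm : ∑ i, z i = n * m) :
    ∑ i, (z i - m) ^ 2 ≤ ∑ i, z i ^ 2 := by
  have : ∑ i, (z i - m) ^ 2 = ∑ i, z i ^ 2 - 2 * m * (∑ i, z i) + n * m ^ 2 := by
    rw [Finset.sum_congr rfl (fun i _ => by ring :
      ∀ i ∈ Finset.univ, (z i - m) ^ 2 = z i ^ 2 - 2 * m * z i + m ^ 2)]
    rw [Finset.sum_add_distrib, Finset.sum_sub_distrib, ← Finset.mul_sum]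
    simp [Finset.card_univ, mul_comm]
  rw [this, hm]
  nlinarith [sq_nonneg m, Nat.cast_nonneg (α := ℝ) n, sq_nonneg ((n:ℝ) * m)]

lemma divergence_lb (f : ℝ → EReal) (hf : IsDivergenceFn f) :
    ∃ c : ℝ, 0 < c ∧ f 1 = 0 ∧
      ∀ t : ℝ, 0 ≤ t → ((c * min ((t - 1) ^ 2) |t - 1| : ℝ) : EReal) ≤ f t := by
  obtain ⟨g, ε₀, hε₀, hfg, hg, hg1, hg'1, hg''1⟩ := hf.smooth
  set U := Set.Ioo (1 - ε₀) (1 + ε₀) with hUdef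
  have hU : IsOpen U := isOpen_Ioo
  have h1U : (1:ℝ) ∈ U := by simp only [hUdef, Set.mem_Ioo]; constructor <;> linarith
  have hf1 : f 1 = 0 := by rw [hfg 1 h1U, hg1]; rfl
  -- regularity of derivatives
  have hgd : ContDiffOn ℝ 2 (deriv g) U :=
    hg.deriv_of_isOpen hU (by norm_num)
  have hgdd : ContDiffOn ℝ 1 (deriv (deriv g)) U :=
    hgd.deriv_of_isOpen hU (by norm_num)
  have hgdiff : ∀ t ∈ U, DifferentiableAt ℝ g t := fun t ht =>
    ((hg.differentiableOn (by norm_num)).differentiableAt (hU.mem_nhds ht))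
  have hg'diff : ∀ t ∈ U, DifferentiableAt ℝ (deriv g) t := fun t ht =>
    ((hgd.differentiableOn (by norm_num)).differentiableAt (hU.mem_nhds ht))
  have hg''cont : ContinuousAt (deriv (deriv g)) 1 :=
    (hgdd.continuousOn.continuousAt (hU.mem_nhds h1U))
  -- find δ₁ with g'' > 1 near 1
  rw [Metric.continuousAt_iff] at hg''cont
  obtain ⟨δ₁, hδ₁pos, hδ₁⟩ := hg''cont 1 one_pos
  set δ := min ε₀ (min δ₁ 2) / 2 with hδdef
  have hδpos : 0 < δ := by
    apply div_pos _ two_pos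
    exact lt_min hε₀ (lt_min hδ₁pos two_pos)
  have hδε₀ : δ < ε₀ := by
    have h := min_le_left ε₀ (min δ₁ 2)
    rw [hδdef]; linarith
  have hδδ₁ : δ < δ₁ := by
    have h := (min_le_right ε₀ (min δ₁ 2)).trans (min_le_left δ₁ 2)
    rw [hδdef]; linarith
  have hδ1 : δ ≤ 1 := by
    have h := (min_le_right ε₀ (min δ₁ 2)).trans (min_le_right δ₁ 2)
    rw [hδdef]; linarith
  have Isub : Set.Icc (1 - δ) (1 + δ) ⊆ U := by
    intro t ht
    obtain ⟨h1, h2⟩ := ht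
    simp only [hUdef, Set.mem_Ioo]; constructor <;> linarith
  have hg''ge : ∀ t ∈ Set.Icc (1 - δ) (1 + δ), 1 ≤ deriv (deriv g) t := by
    intro t ht
    obtain ⟨h1, h2⟩ := ht
    have hd : dist t 1 < δ₁ := by
      rw [Real.dist_eq]
      rw [abs_lt]
      constructor <;> linarith
    have := hδ₁ hd
    rw [hg''1, Real.dist_eq, abs_lt] at this
    linarith [this.1]
  -- the auxiliary functions φ = g - (·-1)²/4 and ψ = φ'
  set ψ : ℝ → ℝ := fun t => deriv g t - (t - 1) / 2 with hψdef
  set φ : ℝ → ℝ := fun t => g t - (t - 1) ^ 2 / 4 with hφdef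
  have hφd : ∀ t ∈ U, HasDerivAt φ (ψ t) t := by
    intro t ht
    have h1 : HasDerivAt (fun t : ℝ => (t - 1) ^ 2 / 4) ((t - 1) / 2) t := by
      have := (((hasDerivAt_id' t).sub_const 1).fun_pow 2).div_const 4
      refine this.congr_deriv ?_
      ring
    exact ((hgdiff t ht).hasDerivAt).sub h1
  have hψd : ∀ t ∈ U, HasDerivAt ψ (deriv (deriv g) t - 1 / 2) t := by
    intro t ht
    have h1 : HasDerivAt (fun t : ℝ => (t - 1) / 2) (1 / 2) t := by
      have := ((hasDerivAt_id' t).sub_const 1).div_const 2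
      convert this using 1
    exact ((hg'diff t ht).hasDerivAt).sub h1
  have hψmono : StrictMonoOn ψ (Set.Icc (1 - δ) (1 + δ)) := by
    apply strictMonoOn_of_deriv_pos (convex_Icc _ _)
    · intro t ht
      exact (hψd t (Isub ht)).continuousAt.continuousWithinAt
    · intro t ht
      rw [interior_Icc] at ht
      have htI : t ∈ Set.Icc (1 - δ) (1 + δ) := Set.mem_Icc_of_Ioo ht
      rw [(hψd t (Isub htI)).deriv]
      have := hg''ge t htI
      linarith
  have hψ1 : ψ 1 = 0 := by simp [hψdef, hg'1]
  have h1I : (1:ℝ) ∈ Set.Icc (1 - δ) (1 + δ) := by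
    constructor <;> linarith
  have hφ1 : φ 1 = 0 := by simp [hφdef, hg1]
  -- key: g t ≥ (t-1)²/4 on [1-δ, 1+δ]
  have key : ∀ t ∈ Set.Icc (1 - δ) (1 + δ), (t - 1) ^ 2 / 4 ≤ g t := by
    intro t ht
    obtain ⟨ht1, ht2⟩ := ht
    have hsub1 : Set.Icc 1 (1 + δ) ⊆ Set.Icc (1 - δ) (1 + δ) :=
      Set.Icc_subset_Icc (by linarith) le_rfl
    have hsub2 : Set.Icc (1 - δ) 1 ⊆ Set.Icc (1 - δ) (1 + δ) :=
      Set.Icc_subset_Icc le_rfl (by linarith)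
    have hφt : 0 ≤ φ t := by
      rcases le_total 1 t with h | h
      · -- monotone on [1, 1+δ]
        have hmono : MonotoneOn φ (Set.Icc 1 (1 + δ)) := by
          apply monotoneOn_of_deriv_nonneg (convex_Icc _ _)
          · intro s hs
            exact (hφd s (Isub (hsub1 hs))).continuousAt.continuousWithinAt
          · intro s hs
            rw [interior_Icc] at hs
            exact (hφd s (Isub (hsub1 (Set.mem_Icc_of_Ioo hs)))).differentiableAt.differentiableWithinAt
          · intro s hs
            rw [interior_Icc] at hs
            have hsI : s ∈ Set.Icc 1 (1 + δ) := Set.mem_Icc_of_Ioo hs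
            rw [(hφd s (Isub (hsub1 hsI))).deriv]
            have : ψ 1 < ψ s := hψmono h1I (hsub1 hsI) hs.1
            linarith [hψ1]
        have := hmono (Set.mem_Icc.mpr ⟨le_rfl, by linarith⟩)
          (Set.mem_Icc.mpr ⟨h, ht2⟩) h
        linarith [hφ1]
      · -- antitone on [1-δ, 1]
        have hmono : AntitoneOn φ (Set.Icc (1 - δ) 1) := by
          apply antitoneOn_of_deriv_nonpos (convex_Icc _ _)
          · intro s hs
            exact (hφd s (Isub (hsub2 hs))).continuousAt.continuousWithinAt
          · intro s hs
            rw [interior_Icc] at hs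
            exact (hφd s (Isub (hsub2 (Set.mem_Icc_of_Ioo hs)))).differentiableAt.differentiableWithinAt
          · intro s hs
            rw [interior_Icc] at hs
            have hsI : s ∈ Set.Icc (1 - δ) 1 := Set.mem_Icc_of_Ioo hs
            rw [(hφd s (Isub (hsub2 hsI))).deriv]
            have : ψ s < ψ 1 := hψmono (hsub2 hsI) h1I hs.2
            linarith [hψ1]
        have := hmono (Set.mem_Icc.mpr ⟨ht1, h⟩)
          (Set.mem_Icc.mpr ⟨by linarith, le_rfl⟩) h
        linarith [hφ1]
    simp only [hφdef] at hφt
    linarith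
  -- now assemble, with c = δ/4
  refine ⟨δ / 4, by linarith, hf1, ?_⟩
  intro t ht
  have hmin_nonneg : 0 ≤ min ((t - 1) ^ 2) |t - 1| :=
    le_min (sq_nonneg _) (abs_nonneg _)
  rcases le_total t (1 + δ) with hcase1 | hcase1
  · rcases le_total (1 - δ) t with hcase2 | hcase2
    · -- middle region
      have htI : t ∈ Set.Icc (1 - δ) (1 + δ) := ⟨hcase2, hcase1⟩
      rw [hfg t (Isub htI)]
      rw [EReal.coe_le_coe_iff]
      have h1 : min ((t - 1) ^ 2) |t - 1| ≤ (t - 1) ^ 2 := min_le_left _ _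
      have h3 := mul_le_mul_of_nonneg_left h1 (by linarith : (0:ℝ) ≤ δ / 4)
      have h2 := key t htI
      nlinarith [sq_nonneg (t - 1)]
    · -- left region : t ≤ 1 - δ (and t ≥ 0)
      by_cases htop : f t = ⊤
      · rw [htop]; exact le_top
      set b := δ / (1 - t) with hbdef
      have h1t : δ ≤ 1 - t := by linarith
      have h1tpos : 0 < 1 - t := by linarith
      have hb0 : 0 < b := div_pos hδpos h1tpos
      have hb1 : b ≤ 1 := by
        rw [div_le_one h1tpos]; linarith
      have hab : (1 - b) + b = 1 := by ring
      have hconv := hf.convex 1 t (1 - b) b (by linarith) hb0.le hab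
      have heq : (1 - b) * 1 + b * t = 1 - δ := by
        rw [hbdef]
        field_simp
        ring
      rw [heq, hf1, mul_zero, zero_add] at hconv
      have hsU : (1 - δ : ℝ) ∈ U := by simp only [hUdef, Set.mem_Ioo]; constructor <;> linarith
      rw [hfg _ hsU] at hconv
      have hgs : δ ^ 2 / 4 ≤ g (1 - δ) := by
        have := key (1 - δ) ⟨le_rfl, by linarith⟩
        have heq2 : ((1 - δ) - 1) ^ 2 = δ ^ 2 := by ring
        rw [heq2] at this
        exact this
      -- f t is not ⊥
      by_cases hbot : f t = ⊥
      · rw [hbot, EReal.coe_mul_bot_of_pos hb0, le_bot_iff] at hconv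
        exact absurd hconv (EReal.coe_ne_bot _)
      obtain ⟨r, hr⟩ : ∃ r : ℝ, f t = (r : EReal) := ⟨(f t).toReal, (EReal.coe_toReal htop hbot).symm⟩
      rw [hr] at hconv ⊢
      rw [← EReal.coe_mul, EReal.coe_le_coe_iff] at hconv
      rw [EReal.coe_le_coe_iff]
      -- g (1-δ) ≤ b * r, so r ≥ δ(1-t)/4
      have hbr : δ ^ 2 / 4 ≤ b * r := le_trans hgs hconv
      have hrge : δ * (1 - t) / 4 ≤ r := by
        have hb : b * (1 - t) = δ := by rw [hbdef]; field_simp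
        have h2 : δ ^ 2 / 4 * (1 - t) ≤ b * r * (1 - t) :=
          mul_le_mul_of_nonneg_right hbr h1tpos.le
        have h3 : b * r * (1 - t) = δ * r := by
          calc b * r * (1 - t) = b * (1 - t) * r := by ring
          _ = δ * r := by rw [hb]
        have h4 : δ * (δ * (1 - t) / 4) ≤ δ * r := by nlinarith
        exact le_of_mul_le_mul_left h4 hδpos
      have habs : |t - 1| = 1 - t := by
        rw [abs_of_nonpos (by linarith)]; ring
      have : min ((t - 1) ^ 2) |t - 1| ≤ 1 - t :=
        (min_le_right _ _).trans habs.le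
      have := mul_le_mul_of_nonneg_left this (by linarith : (0:ℝ) ≤ δ / 4)
      linarith
  · -- right region : t ≥ 1 + δ
    by_cases htop : f t = ⊤
    · rw [htop]; exact le_top
    set b := δ / (t - 1) with hbdef
    have h1t : δ ≤ t - 1 := by linarith
    have h1tpos : 0 < t - 1 := by linarith
    have hb0 : 0 < b := div_pos hδpos h1tpos
    have hb1 : b ≤ 1 := by
      rw [div_le_one h1tpos]; linarith
    have hab : (1 - b) + b = 1 := by ring
    have hconv := hf.convex 1 t (1 - b) b (by linarith) hb0.le hab
    have heq : (1 - b) * 1 + b * t = 1 + δ := by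
      rw [hbdef]
      field_simp
      ring
    rw [heq, hf1, mul_zero, zero_add] at hconv
    have hsU : (1 + δ : ℝ) ∈ U := by simp only [hUdef, Set.mem_Ioo]; constructor <;> linarith
    rw [hfg _ hsU] at hconv
    have hgs : δ ^ 2 / 4 ≤ g (1 + δ) := by
      have := key (1 + δ) ⟨by linarith, le_rfl⟩
      have heq2 : ((1 + δ) - 1) ^ 2 = δ ^ 2 := by ring
      rw [heq2] at this
      exact this
    by_cases hbot : f t = ⊥
    · rw [hbot, EReal.coe_mul_bot_of_pos hb0, le_bot_iff] at hconv
      exact absurd hconv (EReal.coe_ne_bot _)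
    obtain ⟨r, hr⟩ : ∃ r : ℝ, f t = (r : EReal) := ⟨(f t).toReal, (EReal.coe_toReal htop hbot).symm⟩
    rw [hr] at hconv ⊢
    rw [← EReal.coe_mul, EReal.coe_le_coe_iff] at hconv
    rw [EReal.coe_le_coe_iff]
    have hbr : δ ^ 2 / 4 ≤ b * r := le_trans hgs hconv
    have hrge : δ * (t - 1) / 4 ≤ r := by
      have hb : b * (t - 1) = δ := by rw [hbdef]; field_simp
      have h2 : δ ^ 2 / 4 * (t - 1) ≤ b * r * (t - 1) :=
        mul_le_mul_of_nonneg_right hbr h1tpos.le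
      have h3 : b * r * (t - 1) = δ * r := by
        calc b * r * (t - 1) = b * (t - 1) * r := by ring
        _ = δ * r := by rw [hb]
      have h4 : δ * (δ * (t - 1) / 4) ≤ δ * r := by nlinarith
      exact le_of_mul_le_mul_left h4 hδpos
    have habs : |t - 1| = t - 1 := abs_of_nonneg (by linarith)
    have : min ((t - 1) ^ 2) |t - 1| ≤ t - 1 :=
      (min_le_right _ _).trans habs.le
    have := mul_le_mul_of_nonneg_left this (by linarith : (0:ℝ) ≤ δ / 4)
    linarith

lemma ball_bound {f : ℝ → EReal} {c : ℝ} (hc : 0 < c)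
    (hlb : ∀ t : ℝ, 0 ≤ t → ((c * min ((t - 1) ^ 2) |t - 1| : ℝ) : EReal) ≤ f t)
    {ρ : ℝ} {n : ℕ} (hn : 0 < n) {p : Fin n → ℝ}
    (hp : p ∈ simplexBall f n ρ) (z : Fin n → ℝ) {K : ℝ}
    (hK : ∀ i, |z i - sampleMean z| ≤ K) :
    |∑ i, p i * z i - sampleMean z| ≤
      (Real.sqrt (ρ / c * ∑ i, (z i - sampleMean z) ^ 2) + ρ / c * K) / n := by
  obtain ⟨hp0, hp1, hpf⟩ := hp
  set m := sampleMean z with hm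
  set v : Fin n → ℝ := fun i => z i - m with hv
  set u : Fin n → ℝ := fun i => (n : ℝ) * p i - 1 with hu
  have hnR : (0:ℝ) < n := by exact_mod_cast hn
  have hK0 : 0 ≤ K := le_trans (abs_nonneg _) (hK ⟨0, hn⟩)
  -- Step A : the divergence bound gives a bound on the u's
  have hminsum : ∑ i, min ((u i) ^ 2) |u i| ≤ ρ / c := by
    have h1 : ∀ i : Fin n, ((c * min ((u i) ^ 2) |u i| : ℝ) : EReal) ≤ f ((n:ℝ) * p i) := by
      intro i
      have := hlb ((n:ℝ) * p i) (mul_nonneg hnR.le (hp0 i))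
      have he : (n:ℝ) * p i - 1 = u i := by rw [hu]
      rwa [he] at this
    have h2 : ((∑ i, c * min ((u i) ^ 2) |u i| : ℝ) : EReal) ≤ (ρ : EReal) := by
      rw [aux_coe_fsum]
      exact le_trans (Finset.sum_le_sum fun i _ => h1 i) hpf
    rw [EReal.coe_le_coe_iff, ← Finset.mul_sum] at h2
    rw [le_div_iff₀ hc, mul_comm]
    exact h2
  have hmin_nonneg : ∀ i : Fin n, 0 ≤ min ((u i) ^ 2) |u i| := fun i =>
    le_min (sq_nonneg _) (abs_nonneg _)
  have hρc : 0 ≤ ρ / c := le_trans (Finset.sum_nonneg fun i _ => hmin_nonneg i) hminsum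
  -- Step B : identity
  have hzsum : ∑ i, z i = (n:ℝ) * m := by
    rw [hm]; unfold sampleMean; field_simp
  have keyid : ∑ i, u i * v i = (n:ℝ) * (∑ i, p i * z i - m) := by
    have e1 : ∑ i, u i * v i =
        ∑ i, ((n:ℝ) * (p i * z i) - (n:ℝ) * m * p i - z i + m) :=
      Finset.sum_congr rfl fun i _ => by rw [hu, hv]; ring
    rw [e1]
    rw [Finset.sum_add_distrib, Finset.sum_sub_distrib, Finset.sum_sub_distrib,
      ← Finset.mul_sum, ← Finset.mul_sum, hp1, hzsum]
    simp [Finset.card_univ]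
    ring
  -- Step C : split and bound
  set S : Finset (Fin n) := Finset.univ.filter (fun i => |u i| ≤ 1) with hS
  have hS2 : ∑ i ∈ S, (u i) ^ 2 ≤ ρ / c := by
    have e : ∑ i ∈ S, (u i) ^ 2 = ∑ i ∈ S, min ((u i) ^ 2) |u i| := by
      apply Finset.sum_congr rfl
      intro i hi
      rw [hS, Finset.mem_filter] at hi
      have h1 : (u i) ^ 2 ≤ |u i| := by
        nlinarith [sq_abs (u i), abs_nonneg (u i), hi.2]
      rw [min_eq_left h1]
    rw [e]
    exact le_trans (Finset.sum_le_sum_of_subset_of_nonneg (Finset.filter_subset _ _)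
      fun i _ _ => hmin_nonneg i) hminsum
  have hL : ∑ i ∈ Sᶜ, |u i| ≤ ρ / c := by
    have e : ∑ i ∈ Sᶜ, |u i| = ∑ i ∈ Sᶜ, min ((u i) ^ 2) |u i| := by
      apply Finset.sum_congr rfl
      intro i hi
      rw [Finset.mem_compl, hS, Finset.mem_filter] at hi
      push_neg at hi
      have h1 : |u i| ≤ (u i) ^ 2 := by
        have := hi (Finset.mem_univ i)
        nlinarith [abs_nonneg (u i), sq_abs (u i)]
      rw [min_eq_right h1]
    rw [e]
    exact le_trans (Finset.sum_le_sum_of_subset_of_nonneg (Finset.subset_univ _)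
      fun i _ _ => hmin_nonneg i) hminsum
  -- Cauchy-Schwarz on S
  have bound1 : |∑ i ∈ S, u i * v i| ≤ Real.sqrt (ρ / c * ∑ i, (v i) ^ 2) := by
    have hvs : ∑ i ∈ S, (v i) ^ 2 ≤ ∑ i, (v i) ^ 2 :=
      Finset.sum_le_sum_of_subset_of_nonneg (Finset.subset_univ _) fun i _ _ => sq_nonneg _
    have csp := Real.sum_mul_le_sqrt_mul_sqrt S u v
    have csn := Real.sum_mul_le_sqrt_mul_sqrt S (fun i => -u i) v
    simp only [neg_mul, Finset.sum_neg_distrib, neg_sq] at csn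
    have habs : |∑ i ∈ S, u i * v i| ≤
        Real.sqrt (∑ i ∈ S, (u i) ^ 2) * Real.sqrt (∑ i ∈ S, (v i) ^ 2) := by
      rw [abs_le]
      constructor
      · linarith
      · exact csp
    apply habs.trans
    rw [← Real.sqrt_mul (Finset.sum_nonneg fun i _ => sq_nonneg _)]
    apply Real.sqrt_le_sqrt
    apply mul_le_mul hS2 hvs (Finset.sum_nonneg fun i _ => sq_nonneg _) hρc
  have bound2 : |∑ i ∈ Sᶜ, u i * v i| ≤ ρ / c * K := by
    calc |∑ i ∈ Sᶜ, u i * v i| ≤ ∑ i ∈ Sᶜ, |u i * v i| := Finset.abs_sum_le_sum_abs _ _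
    _ ≤ ∑ i ∈ Sᶜ, |u i| * K := by
        apply Finset.sum_le_sum
        intro i _
        rw [abs_mul]
        exact mul_le_mul_of_nonneg_left (hK i) (abs_nonneg _)
    _ = (∑ i ∈ Sᶜ, |u i|) * K := by rw [Finset.sum_mul]
    _ ≤ ρ / c * K := mul_le_mul_of_nonneg_right hL hK0
  have hsplit : ∑ i, u i * v i = (∑ i ∈ S, u i * v i) + ∑ i ∈ Sᶜ, u i * v i := by
    exact (Finset.sum_add_sum_compl S _).symm
  have htot : |∑ i, u i * v i| ≤
      Real.sqrt (ρ / c * ∑ i, (v i) ^ 2) + ρ / c * K := by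
    rw [hsplit]
    exact le_trans (abs_add_le _ _) (add_le_add bound1 bound2)
  -- conclude
  have hdiv : |∑ i, p i * z i - m| = |∑ i, u i * v i| / n := by
    rw [keyid, abs_mul, abs_of_pos hnR]
    field_simp
  rw [hdiv]
  gcongr

end Aux

theorem stmt19 (f : ℝ → EReal) (hf : IsDivergenceFn f) (ρ : ℝ) (hρ : 0 < ρ)
    {Ω : Type*} [MeasurableSpace Ω] (μ : Measure Ω) [IsProbabilityMeasure μ]
    (W : ℕ → Ω → ℝ) (hmeas : ∀ i, Measurable (W i))
    (hindep : iIndepFun W μ)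
    (hident : ∀ i, IdentDistrib (W i) (W 0) μ μ)
    (ε : ℝ) (hε : 0 < ε)
    (hmom : Integrable (fun ω => |W 0 ω| ^ (1 + ε)) μ) :
    ∀ᵐ ω ∂μ,
      Tendsto (fun n : ℕ =>
          sSup ((fun p : Fin n → ℝ => ∑ i, p i * W i.1 ω) '' simplexBall f n ρ))
        atTop (nhds (∫ ω', W 0 ω' ∂μ)) ∧
      Tendsto (fun n : ℕ =>
          sInf ((fun p : Fin n → ℝ => ∑ i, p i * W i.1 ω) '' simplexBall f n ρ))
        atTop (nhds (∫ ω', W 0 ω' ∂μ)) := by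
  obtain ⟨c, hc, hf1, hlb⟩ := divergence_lb f hf
  have hρc : 0 < ρ / c := div_pos hρ hc
  set m := ∫ ω', W 0 ω' ∂μ with hm
  set ε' := min ε 1 with hε'def
  have hε'pos : 0 < ε' := lt_min hε one_pos
  have hε'le : ε' ≤ ε := min_le_left _ _
  have hε'1 : ε' ≤ 1 := min_le_right _ _
  set a := 1 + ε' with hadef
  have ha1 : 1 ≤ a := by rw [hadef]; linarith
  have ha2 : a ≤ 2 := by rw [hadef]; linarith
  have ha0 : 0 ≤ a := by linarith
  set φ : ℝ → ℝ := fun x => |x| ^ a with hφdef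
  have hφmeas : Measurable φ :=
    ((Real.continuous_rpow_const ha0).comp continuous_abs).measurable
  set Y : ℕ → Ω → ℝ := fun i ω => |W i ω| ^ a with hYdef
  have hYmeas : ∀ i, Measurable (Y i) := fun i => hφmeas.comp (hmeas i)
  -- integrability
  have hgint : Integrable (fun ω => 1 + |W 0 ω| ^ (1 + ε)) μ :=
    (integrable_const 1).add hmom
  have habs_bd : ∀ ω, |W 0 ω| ≤ 1 + |W 0 ω| ^ (1 + ε) := fun ω =>
    aux_self_le_one_add_rpow (abs_nonneg _) (by linarith)
  have hWint : Integrable (W 0) μ := by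
    apply hgint.mono ((hmeas 0).aestronglyMeasurable)
    apply ae_of_all
    intro ω
    rw [Real.norm_eq_abs, Real.norm_eq_abs]
    have h1 := habs_bd ω
    have h2 : (0:ℝ) ≤ 1 + |W 0 ω| ^ (1 + ε) := le_trans (abs_nonneg _) h1
    rw [abs_of_nonneg h2]
    exact h1
  have hYint : Integrable (Y 0) μ := by
    apply hgint.mono ((hYmeas 0).aestronglyMeasurable)
    apply ae_of_all
    intro ω
    rw [Real.norm_eq_abs, Real.norm_eq_abs]
    have h1 : |W 0 ω| ^ a ≤ 1 + |W 0 ω| ^ (1 + ε) :=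
      aux_rpow_le_one_add_rpow (abs_nonneg _) ha0 (by rw [hadef]; linarith)
    have h0 : (0:ℝ) ≤ |W 0 ω| ^ a := Real.rpow_nonneg (abs_nonneg _) a
    have h2 : (0:ℝ) ≤ 1 + |W 0 ω| ^ (1 + ε) := le_trans h0 h1
    rw [abs_of_nonneg h0, abs_of_nonneg h2]
    exact h1
  -- strong laws of large numbers
  have hpairW : Pairwise (Function.onFun (IndepFun · · μ) W) := fun i j hij => hindep.indepFun hij
  have hsllnW := ProbabilityTheory.strong_law_ae_real W hWint hpairW hident
  have hpairY : Pairwise (Function.onFun (IndepFun · · μ) Y) := fun i j hij =>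
    (hindep.indepFun hij).comp hφmeas hφmeas
  have hidentY : ∀ i, IdentDistrib (Y i) (Y 0) μ μ := fun i => (hident i).comp hφmeas
  have hsllnY := ProbabilityTheory.strong_law_ae_real Y hYint hpairY hidentY
  set m₂ := μ[Y 0] with hm₂
  filter_upwards [hsllnW, hsllnY] with ω hA hB
  -- notation for the fixed ω
  set Wb : ℕ → ℝ := fun n => (∑ i ∈ Finset.range n, W i ω) / n with hWbdef
  set SY : ℕ → ℝ := fun n => ∑ i ∈ Finset.range n, Y i ω with hSYdef
  have hA' : Tendsto Wb atTop (nhds m) := hA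
  have hB' : Tendsto (fun n => SY n / n) atTop (nhds m₂) := hB
  have hY0 : ∀ i, 0 ≤ Y i ω := fun i => Real.rpow_nonneg (abs_nonneg _) a
  have hYdiv : Tendsto (fun n : ℕ => Y n ω / n) atTop (nhds 0) := by
    have h := aux_term_div SY m₂ hB'
    apply h.congr
    intro n
    rw [hSYdef]
    simp only [Finset.sum_range_succ]
    rw [add_sub_cancel_left]
  set M : ℕ → ℝ := fun n => runMax (fun i => Y i ω) n with hMdef
  have hM : Tendsto (fun n : ℕ => M n / n) atTop (nhds 0) :=
    runMax_tendsto _ hY0 hYdiv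
  have hM0 : ∀ n, 0 ≤ M n := fun n => runMax_nonneg _ n
  set V : ℕ → ℝ := fun n => ∑ i : Fin n, (W i.1 ω - Wb n) ^ 2 with hVdef
  set K : ℕ → ℝ := fun n => 1 + M n + |Wb n| with hKdef
  set b : ℕ → ℝ := fun n => (Real.sqrt (ρ / c * V n) + ρ / c * K n) / n with hbdef
  have hV0 : ∀ n, 0 ≤ V n := fun n => Finset.sum_nonneg fun i _ => sq_nonneg _
  -- sample mean identification
  have hsm : ∀ n : ℕ, sampleMean (fun i : Fin n => W i.1 ω) = Wb n := by
    intro n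
    rw [sampleMean, hWbdef]
    congr 1
    exact Fin.sum_univ_eq_sum_range (fun i => W i ω) n
  -- b tends to zero
  have hb0 : Tendsto b atTop (nhds 0) := by
    have hinv : Tendsto (fun n : ℕ => (1:ℝ) / n) atTop (nhds 0) :=
      tendsto_one_div_atTop_nhds_zero_nat
    -- second part
    have hpart2 : Tendsto (fun n : ℕ => ρ / c * K n / n) atTop (nhds 0) := by
      have hKn : Tendsto (fun n : ℕ => K n / n) atTop (nhds 0) := by
        have h1 : Tendsto (fun n : ℕ => |Wb n| / n) atTop (nhds 0) := by
          have habs : Tendsto (fun n : ℕ => |Wb n|) atTop (nhds |m|) := hA'.abs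
          have := habs.mul hinv
          rw [mul_zero] at this
          apply this.congr
          intro n
          ring
        have h2 := (hinv.add hM).add h1
        rw [add_zero, add_zero] at h2
        apply h2.congr
        intro n
        rw [hKdef]
        ring
      have := hKn.const_mul (ρ / c)
      rw [mul_zero] at this
      apply this.congr
      intro n
      ring
    -- first part
    have hpart1 : Tendsto (fun n : ℕ => Real.sqrt (ρ / c * V n) / n) atTop (nhds 0) := by
      have hVbound : ∀ n : ℕ, 1 ≤ n → V n / (n:ℝ) ^ 2 ≤ (2 + M n) / n * (SY n / n) := by
        intro n hn
        have hnR : (0:ℝ) < n := by exact_mod_cast hn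
        have hzsum : ∑ i : Fin n, W i.1 ω = (n:ℝ) * Wb n := by
          rw [show Wb n = (∑ i ∈ Finset.range n, W i ω) / n from rfl,
            ← Fin.sum_univ_eq_sum_range (fun i => W i ω) n]
          field_simp
        have e1 : V n ≤ ∑ i : Fin n, (W i.1 ω) ^ 2 :=
          aux_dev_sq_le _ _ hzsum
        have e2 : ∑ i : Fin n, (W i.1 ω) ^ 2 ≤ (2 + M n) * SY n := by
          have hterm : ∀ i : Fin n, (W i.1 ω) ^ 2 ≤ (2 + M n) * Y i.1 ω := by
            intro i
            have h1 : |W i.1 ω| ^ (2:ℕ) ≤ (2 + Y i.1 ω) * Y i.1 ω :=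
              aux_sq_le (abs_nonneg _) ha1 ha2
            have h2 : Y i.1 ω ≤ M n := le_runMax (fun j => Y j ω) i.2
            have h3 : (2 + Y i.1 ω) * Y i.1 ω ≤ (2 + M n) * Y i.1 ω :=
              mul_le_mul_of_nonneg_right (by linarith) (hY0 i.1)
            calc (W i.1 ω) ^ 2 = |W i.1 ω| ^ (2:ℕ) := (sq_abs _).symm
            _ ≤ (2 + Y i.1 ω) * Y i.1 ω := h1
            _ ≤ (2 + M n) * Y i.1 ω := h3
          calc ∑ i : Fin n, (W i.1 ω) ^ 2 ≤ ∑ i : Fin n, (2 + M n) * Y i.1 ω :=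
            Finset.sum_le_sum fun i _ => hterm i
          _ = (2 + M n) * SY n := by
              rw [← Finset.mul_sum, hSYdef, Fin.sum_univ_eq_sum_range (fun i => Y i ω) n]
        have : V n ≤ (2 + M n) * SY n := le_trans e1 e2
        rw [div_le_iff₀ (by positivity)]
        calc V n ≤ (2 + M n) * SY n := this
        _ = (2 + M n) / n * (SY n / n) * (n:ℝ) ^ 2 := by
            field_simp
      have hub : Tendsto (fun n : ℕ => ρ / c * ((2 + M n) / n * (SY n / n)))
          atTop (nhds 0) := by
        have h2M : Tendsto (fun n : ℕ => (2 + M n) / n) atTop (nhds 0) := by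
          have h1 := (hinv.const_mul (2:ℝ)).add hM
          rw [mul_zero, add_zero] at h1
          apply h1.congr
          intro n
          ring
        have := (h2M.mul hB').const_mul (ρ / c)
        rw [zero_mul, mul_zero] at this
        exact this
      have hQ : Tendsto (fun n : ℕ => ρ / c * V n / (n:ℝ) ^ 2) atTop (nhds 0) := by
        apply tendsto_of_tendsto_of_tendsto_of_le_of_le' tendsto_const_nhds hub
        · filter_upwards [eventually_ge_atTop 1] with n hn
          positivity
        · filter_upwards [eventually_ge_atTop 1] with n hn
          have h := hVbound n hn
          calc ρ / c * V n / (n:ℝ) ^ 2 = ρ / c * (V n / (n:ℝ) ^ 2) := by ring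
          _ ≤ ρ / c * ((2 + M n) / n * (SY n / n)) :=
            mul_le_mul_of_nonneg_left h hρc.le
      have hsqrt : Tendsto (fun n : ℕ => Real.sqrt (ρ / c * V n / (n:ℝ) ^ 2))
          atTop (nhds 0) := by
        have := (Real.continuous_sqrt.tendsto 0).comp hQ
        rw [Real.sqrt_zero] at this
        exact this
      apply hsqrt.congr'
      filter_upwards [eventually_ge_atTop 1] with n hn
      have hnR : (0:ℝ) < n := by exact_mod_cast hn
      rw [Real.sqrt_div (by positivity) ((n:ℝ) ^ 2)]
      congr 1
      rw [show ((n:ℝ) ^ 2) = (n:ℝ) * (n:ℝ) by ring, Real.sqrt_mul_self hnR.le]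
    have h := hpart1.add hpart2
    rw [add_zero] at h
    apply h.congr
    intro n
    rw [hbdef]
    ring
  -- the sandwich bounds for n ≥ 1
  have hmem : ∀ n : ℕ, 1 ≤ n →
      Wb n ∈ ((fun p : Fin n → ℝ => ∑ i, p i * W i.1 ω) '' simplexBall f n ρ) := by
    intro n hn
    have hnR : (0:ℝ) < n := by exact_mod_cast hn
    refine ⟨fun _ => 1 / n, ⟨fun i => by positivity, ?_, ?_⟩, ?_⟩
    · show ∑ _i : Fin n, (1 / (n:ℝ)) = 1
      rw [Finset.sum_const, Finset.card_univ, Fintype.card_fin, nsmul_eq_mul]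
      field_simp
    · show ∑ _i : Fin n, f ((n:ℝ) * (1 / n)) ≤ (ρ : EReal)
      have he : f ((n:ℝ) * (1 / n)) = (0 : EReal) := by
        rw [mul_one_div, div_self hnR.ne', hf1]
      rw [he, Finset.sum_const, smul_zero]
      exact_mod_cast EReal.coe_nonneg.mpr hρ.le
    · show ∑ i : Fin n, (1 / (n:ℝ)) * W i.1 ω = Wb n
      rw [show Wb n = (∑ i ∈ Finset.range n, W i ω) / n from rfl,
        ← Fin.sum_univ_eq_sum_range (fun i => W i ω) n, Finset.sum_div]
      exact Finset.sum_congr rfl fun i _ => by ring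
  have hub : ∀ n : ℕ, 1 ≤ n →
      ∀ x ∈ ((fun p : Fin n → ℝ => ∑ i, p i * W i.1 ω) '' simplexBall f n ρ),
        |x - Wb n| ≤ b n := by
    intro n hn x hx
    obtain ⟨p, hp, rfl⟩ := hx
    have hnpos : 0 < n := hn
    have hK : ∀ i : Fin n, |W i.1 ω - sampleMean (fun i : Fin n => W i.1 ω)| ≤ K n := by
      intro i
      rw [hsm n]
      have h1 : |W i.1 ω| ≤ 1 + Y i.1 ω :=
        aux_self_le_one_add_rpow (abs_nonneg _) ha1
      have h2 : Y i.1 ω ≤ M n := le_runMax (fun j => Y j ω) i.2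
      calc |W i.1 ω - Wb n| ≤ |W i.1 ω| + |Wb n| := abs_sub _ _
      _ ≤ 1 + M n + |Wb n| := by linarith
      _ = K n := by rw [hKdef]
    have := ball_bound hc hlb hnpos hp (fun i : Fin n => W i.1 ω) hK
    rw [hsm n] at this
    exact this
  -- sandwich and conclude
  have hbdd : ∀ n : ℕ, 1 ≤ n →
      ∀ x ∈ ((fun p : Fin n → ℝ => ∑ i, p i * W i.1 ω) '' simplexBall f n ρ),
        Wb n - b n ≤ x ∧ x ≤ Wb n + b n := by
    intro n hn x hx
    have h := abs_le.mp (hub n hn x hx)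
    constructor <;> linarith [h.1, h.2]
  constructor
  · apply tendsto_of_tendsto_of_tendsto_of_le_of_le' hA' (by simpa using hA'.add hb0)
    · filter_upwards [eventually_ge_atTop 1] with n hn
      exact le_csSup ⟨Wb n + b n, fun x hx => (hbdd n hn x hx).2⟩ (hmem n hn)
    · filter_upwards [eventually_ge_atTop 1] with n hn
      exact csSup_le ⟨Wb n, hmem n hn⟩ fun x hx => (hbdd n hn x hx).2
  · apply tendsto_of_tendsto_of_tendsto_of_le_of_le' (by simpa using hA'.sub hb0) hA'
    · filter_upwards [eventually_ge_atTop 1] with n hn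
      exact le_csInf ⟨Wb n, hmem n hn⟩ fun x hx => (hbdd n hn x hx).1
    · filter_upwards [eventually_ge_atTop 1] with n hn
      exact csInf_le ⟨Wb n - b n, fun x hx => (hbdd n hn x hx).1⟩ (hmem n hn)
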